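/- Let G = ℤ_{n₁} × ⋯ × ℤ_{n_d} with all n_i ≥ 2 and n = n₁n₂⋯n_d, let S be an inverse-closed subset of G∖{(0,…,0)} with ⟨S⟩ = G, and set S₀ = S ∪ {(0,…,0)}. Suppose that |S₀| = p^l is a prime power such that p^l | n but p^{l+1} ∤ n, and suppose further that exactly one of n₁,…,n_d, say n_t, is divisible by p. Then Cay(G, S) admits a perfect code if and only if s_t ≢ s_t′ (mod p^l) for each pair of distinct elements (s₁,…,s_d), (s₁′,…,s_d′) of S₀. -/

import Mathlib

/-- The Cayley graph of an additive group `G` with connection set `S`.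
(When `S` is inverse-closed and does not contain `0`, `x` and `y` are adjacent
iff `y - x ∈ S`.) -/
def cayley {G : Type*} [AddGroup G] (S : Set G) : SimpleGraph G :=
  SimpleGraph.fromRel (fun x y => y - x ∈ S)

/-- A perfect code in a graph: an independent set such that every vertex outside it
has exactly one neighbour in it. -/
def IsPerfectCode {V : Type*} (Γ : SimpleGraph V) (C : Set V) : Prop :=
  (∀ x ∈ C, ∀ y ∈ C, ¬ Γ.Adj x y) ∧ ∀ v, v ∉ C → ∃! c, c ∈ C ∧ Γ.Adj v c

/-- A total perfect code in a graph: every vertex has exactly one neighbour in it. -/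
def IsTotalPerfectCode {V : Type*} (Γ : SimpleGraph V) (C : Set V) : Prop :=
  ∀ v, ∃! c, c ∈ C ∧ Γ.Adj v c

/-- The subgroup of periods of a subset `X` of an abelian group:
`{g | X + g = X}`. -/
def periods {G : Type*} [AddCommGroup G] (X : Set G) : AddSubgroup G where
  carrier := {g | ∀ x : G, x + g ∈ X ↔ x ∈ X}
  zero_mem' := by simp
  add_mem' := by
    intro a b ha hb x
    rw [← add_assoc]
    exact (hb _).trans (ha x)
  neg_mem' := by
    intro a ha x
    have := ha (x + -a)
    simpa using this.symm

/-- `(A, B)` is a factorization of the abelian group `G`: every element of `G` can be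
uniquely written as `a + b` with `a ∈ A` and `b ∈ B`. -/
def IsFactorization {G : Type*} [AddCommGroup G] (A B : Set G) : Prop :=
  ∀ g : G, ∃! ab : G × G, ab.1 ∈ A ∧ ab.2 ∈ B ∧ ab.1 + ab.2 = g

/-- An abelian group is good if in every factorization of it into two factors
at least one factor is periodic. -/
def IsGood (G : Type*) [AddCommGroup G] : Prop :=
  ∀ A B : Set G, IsFactorization A B → periods A ≠ ⊥ ∨ periods B ≠ ⊥

lemma cayley_adj {G : Type*} [AddCommGroup G] (S : Finset G)
    (h0 : (0 : G) ∉ S) (hinv : ∀ s ∈ S, -s ∈ S) (x y : G) :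
    (cayley (S : Set G)).Adj x y ↔ y - x ∈ S := by
  rw [cayley, SimpleGraph.fromRel_adj]
  constructor
  · rintro ⟨hne, h | h⟩
    · exact h
    · have := hinv _ h
      rwa [neg_sub] at this
  · intro h
    refine ⟨fun heq => h0 ?_, Or.inl h⟩
    rw [heq, sub_self] at h
    exact h

lemma tiling_of_code {G : Type*} [AddCommGroup G] [DecidableEq G] (S : Finset G)
    (h0 : (0 : G) ∉ S) (hinv : ∀ s ∈ S, -s ∈ S) (C : Set G)
    (hC : IsPerfectCode (cayley (S : Set G)) C) :
    ∀ g : G, ∃! cs : G × G, cs.1 ∈ C ∧ cs.2 ∈ insert 0 S ∧ cs.1 + cs.2 = g := by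
  obtain ⟨hind, hcov⟩ := hC
  intro g
  by_cases hg : g ∈ C
  · refine ⟨(g, 0), ⟨hg, Finset.mem_insert_self _ _, add_zero g⟩, ?_⟩
    rintro ⟨c, s⟩ ⟨hcC, hsS0, hcs⟩
    rcases Finset.mem_insert.mp hsS0 with h0s | hsS
    · subst h0s
      have : c = g := by rw [← hcs, add_zero]
      rw [this]
    · exfalso
      have hgc : g - c ∈ S := by rw [← hcs]; simpa using hsS
      exact hind c hcC g hg ((cayley_adj S h0 hinv c g).mpr hgc)
  · obtain ⟨c, ⟨hcC, hadj⟩, huniq⟩ := hcov g hg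
    have hcg : c - g ∈ S := (cayley_adj S h0 hinv g c).mp hadj
    have hs : g - c ∈ S := by
      have := hinv _ hcg
      rwa [neg_sub] at this
    refine ⟨(c, g - c), ⟨hcC, Finset.mem_insert_of_mem hs, by rw [add_comm, sub_add_cancel]⟩, ?_⟩
    rintro ⟨c', s'⟩ ⟨hc'C, hs'S0, hcs'⟩
    have hs'ne : s' ≠ 0 := by
      intro h
      rw [h, add_zero] at hcs'
      exact hg (hcs' ▸ hc'C)
    have hs'S : s' ∈ S := (Finset.mem_insert.mp hs'S0).resolve_left hs'ne
    have hadj' : (cayley (S : Set G)).Adj g c' := by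
      refine (cayley_adj S h0 hinv g c').mpr ?_
      have : c' - g = -s' := by rw [← hcs']; abel
      rw [this]
      exact hinv _ hs'S
    have hc'c : c' = c := huniq c' ⟨hc'C, hadj'⟩
    have hs'val : s' = g - c := by rw [← hcs', hc'c]; abel
    rw [hc'c, hs'val]

lemma core_const (p l m : ℕ) (hp : p.Prime) (hm : ¬ p ∣ m) [NeZero (p ^ l)]
    {ι : Type*} (Cf : Finset ι) (hCf : Cf.card = m) (FC : ι → ZMod (p ^ l))
    (A : AddMonoidAlgebra (ZMod p) (ZMod (p ^ l)))
    (hAB : A * (∑ c ∈ Cf, AddMonoidAlgebra.single (FC c) (1 : ZMod p))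
      = AddMonoidAlgebra.single 0 ((m : ZMod p))
          * ∑ r : ZMod (p ^ l), AddMonoidAlgebra.single r (1 : ZMod p)) :
    ∀ r, A.coeff r = A.coeff 0 := by
  classical
  haveI : Fact p.Prime := ⟨hp⟩
  set B : AddMonoidAlgebra (ZMod p) (ZMod (p ^ l)) :=
    ∑ c ∈ Cf, AddMonoidAlgebra.single (FC c) (1 : ZMod p) with hB
  set T : AddMonoidAlgebra (ZMod p) (ZMod (p ^ l)) :=
    ∑ r : ZMod (p ^ l), AddMonoidAlgebra.single r (1 : ZMod p) with hT
  set X : AddMonoidAlgebra (ZMod p) (ZMod (p ^ l)) :=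
    AddMonoidAlgebra.single (1 : ZMod (p ^ l)) (1 : ZMod p) - 1 with hX
  set μ : AddMonoidAlgebra (ZMod p) (ZMod (p ^ l)) :=
    AddMonoidAlgebra.single 0 ((m : ZMod p)) with hμ
  -- characteristic p
  haveI : CharP (AddMonoidAlgebra (ZMod p) (ZMod (p ^ l))) p := by
    refine charP_of_injective_ringHom
      (f := AddMonoidAlgebra.singleZeroRingHom (R := ZMod p) (M := ZMod (p ^ l)))
      (fun a b h => ?_) p
    have h' : Finsupp.single (0 : ZMod (p ^ l)) a = Finsupp.single 0 b := congrArg AddMonoidAlgebra.coeff h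
    exact Finsupp.single_injective 0 h'
  -- single r 1 = (single 1 1) ^ r.val
  have hsingle_pow : ∀ r : ZMod (p ^ l),
      (AddMonoidAlgebra.single (1 : ZMod (p ^ l)) (1 : ZMod p)) ^ r.val
        = AddMonoidAlgebra.single r (1 : ZMod p) := by
    intro r
    rw [AddMonoidAlgebra.single_pow, one_pow, nsmul_eq_mul, mul_one]
    norm_cast
    rw [ZMod.natCast_val, ZMod.cast_id]
  -- X * T = 0
  have hXT : X * T = 0 := by
    rw [hX, sub_mul, one_mul, hT, Finset.mul_sum, sub_eq_zero]
    refine Fintype.sum_equiv (Equiv.addLeft (1 : ZMod (p ^ l))) _ _ (fun r => ?_)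
    rw [AddMonoidAlgebra.single_mul_single, one_mul]
    rfl
  -- X ^ (p ^ l) = 0
  have hXq : X ^ (p ^ l) = 0 := by
    rw [hX, sub_pow_char_pow, one_pow, AddMonoidAlgebra.single_pow, one_pow,
      nsmul_eq_mul, mul_one, show (((p ^ l : ℕ) : ZMod (p ^ l))) = 0 from ZMod.natCast_self _,
      ← AddMonoidAlgebra.one_def, sub_self]
  -- B = μ + X * V
  have hBV : ∃ V, B = μ + X * V := by
    have hdvd : X ∣ B - μ := by
      have hBμ : B - μ = ∑ c ∈ Cf, (AddMonoidAlgebra.single (FC c) (1 : ZMod p) - 1) := by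
        rw [Finset.sum_sub_distrib, hB, hμ, Finset.sum_const, ← hCf]
        congr 1
        rw [AddMonoidAlgebra.one_def]
        have : Cf.card • (AddMonoidAlgebra.single (0 : ZMod (p ^ l)) (1 : ZMod p))
            = AddMonoidAlgebra.single (0 : ZMod (p ^ l)) (Cf.card • (1 : ZMod p)) :=
          (AddMonoidAlgebra.smul_single _ _ _)
        rw [this, nsmul_eq_mul, mul_one]
      rw [hBμ]
      refine Finset.dvd_sum (fun c _ => ?_)
      rw [← hsingle_pow (FC c)]
      simpa using sub_dvd_pow_sub_pow
        (AddMonoidAlgebra.single (1 : ZMod (p ^ l)) (1 : ZMod p)) 1 ((FC c).val)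
    obtain ⟨V, hV⟩ := hdvd
    exact ⟨V, by rw [← hV]; ring⟩
  obtain ⟨V, hV⟩ := hBV
  -- (X * A) * B = 0
  have hXAB : (X * A) * B = 0 := by
    calc (X * A) * B = X * (A * B) := by ring
    _ = X * (μ * T) := by rw [hAB]
    _ = μ * (X * T) := by ring
    _ = 0 := by rw [hXT, mul_zero]
  have hstep : (X * A) * μ = (X * A) * (-(X * V)) := by
    have h : (X * A) * μ + (X * A) * (X * V) = 0 := by
      rw [← mul_add, ← hV, hXAB]
    linear_combination h
  have hiter : ∀ j : ℕ, μ ^ j * (X * A) = (X * A) * (-(X * V)) ^ j := by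
    intro j
    induction j with
    | zero => simp
    | succ j ih =>
      calc μ ^ (j + 1) * (X * A) = (μ ^ j * (X * A)) * μ := by ring
      _ = ((X * A) * (-(X * V)) ^ j) * μ := by rw [ih]
      _ = ((X * A) * μ) * (-(X * V)) ^ j := by ring
      _ = ((X * A) * (-(X * V))) * (-(X * V)) ^ j := by rw [hstep]
      _ = (X * A) * (-(X * V)) ^ (j + 1) := by ring
  have hfin : μ ^ (p ^ l) * (X * A) = 0 := by
    rw [hiter (p ^ l), neg_pow, mul_pow, hXq]
    ring
  have hmk : (m : ZMod p) ≠ 0 := by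
    rw [Ne, ZMod.natCast_eq_zero_iff]
    exact hm
  have hXA : X * A = 0 := by
    have hμq : μ ^ (p ^ l)
        = AddMonoidAlgebra.single (0 : ZMod (p ^ l)) ((m : ZMod p) ^ (p ^ l)) := by
      rw [hμ, AddMonoidAlgebra.single_pow, smul_zero]
    have hinv : AddMonoidAlgebra.single (0 : ZMod (p ^ l)) (((m : ZMod p) ^ (p ^ l))⁻¹)
        * μ ^ (p ^ l) = 1 := by
      rw [hμq, AddMonoidAlgebra.single_mul_single, add_zero,
        inv_mul_cancel₀ (pow_ne_zero _ hmk), ← AddMonoidAlgebra.one_def]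
    calc X * A = 1 * (X * A) := by rw [one_mul]
    _ = AddMonoidAlgebra.single (0 : ZMod (p ^ l)) (((m : ZMod p) ^ (p ^ l))⁻¹)
          * (μ ^ (p ^ l) * (X * A)) := by rw [← hinv, mul_assoc]
    _ = 0 := by rw [hfin, mul_zero]
  have hshift : ∀ r : ZMod (p ^ l), A.coeff (1 + r) = A.coeff r := by
    intro r
    have h1 : AddMonoidAlgebra.single (1 : ZMod (p ^ l)) (1 : ZMod p) * A = A := by
      have h2 := hXA
      rw [hX, sub_mul, one_mul, sub_eq_zero] at h2
      exact h2
    have h2 : (AddMonoidAlgebra.single (1 : ZMod (p ^ l)) (1 : ZMod p) * A).coeff (1 + r)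
        = A.coeff (1 + r) := by rw [h1]
    rw [AddMonoidAlgebra.coeff_single_mul_apply] at h2
    simpa using h2.symm
  have hnat : ∀ j : ℕ, A.coeff ((j : ZMod (p ^ l))) = A.coeff 0 := by
    intro j
    induction j with
    | zero => norm_num
    | succ j ih =>
      have hc : ((j + 1 : ℕ) : ZMod (p ^ l)) = 1 + (j : ZMod (p ^ l)) := by push_cast; ring
      rw [hc, hshift, ih]
  intro r
  have hr : ((r.val : ℕ) : ZMod (p ^ l)) = r := by rw [ZMod.natCast_val, ZMod.cast_id]
  rw [← hr, hnat]

/-- Theorem 4.6: let `G = ℤ_{n₁} × ⋯ × ℤ_{n_d}` of order `n = n₁⋯n_d` and `S` an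
inverse-closed generating subset of `G ∖ {0}` with `|S₀| = p^l` a prime power such
that `p^l ∣ n` but `p^{l+1} ∤ n`, where `S₀ = S ∪ {0}`, and suppose exactly one of
`n₁, …, n_d`, say `n_t`, is divisible by `p`. Then `Cay(G, S)` admits a perfect
code iff `s_t ≢ s'_t (mod p^l)` for all distinct `s, s' ∈ S₀`. -/
theorem perfectCode_iff_mod_p_pow (d : ℕ) (hd : 1 ≤ d) (n : Fin d → ℕ)
    (hn : ∀ i, 2 ≤ n i) [∀ i, NeZero (n i)]
    (S : Finset (∀ i, ZMod (n i))) (h0 : (0 : ∀ i, ZMod (n i)) ∉ S)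
    (hinv : ∀ s ∈ S, -s ∈ S)
    (hgen : AddSubgroup.closure (S : Set (∀ i, ZMod (n i))) = ⊤)
    (p l : ℕ) (hp : p.Prime) (hl : 1 ≤ l)
    (hcard : (insert 0 S).card = p ^ l)
    (hdvd : p ^ l ∣ ∏ i, n i) (hndvd : ¬ p ^ (l + 1) ∣ ∏ i, n i)
    (t : Fin d) (ht : p ∣ n t) (huniq : ∀ i, p ∣ n i → i = t) :
    (∃ C : Set (∀ i, ZMod (n i)),
        IsPerfectCode (cayley (S : Set (∀ i, ZMod (n i)))) C) ↔
      ∀ s ∈ insert 0 S, ∀ s' ∈ insert 0 S, s ≠ s' →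
        ¬ ((s t).val ≡ (s' t).val [MOD p ^ l]) := by
  classical
  haveI : Fact p.Prime := ⟨hp⟩
  haveI : NeZero (p ^ l) := ⟨pow_ne_zero l hp.pos.ne'⟩
  -- p ^ l divides n t
  have hqt : p ^ l ∣ n t := by
    have h1 : (∏ i, n i) = n t * ∏ i ∈ Finset.univ.erase t, n i :=
      (Finset.mul_prod_erase Finset.univ n (Finset.mem_univ t)).symm
    have hcop : (p ^ l).Coprime (∏ i ∈ Finset.univ.erase t, n i) :=
      Nat.Coprime.pow_left _ (Nat.Coprime.prod_right fun i hi =>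
        hp.coprime_iff_not_dvd.mpr (fun hdvd' => Finset.ne_of_mem_erase hi (huniq i hdvd')))
    exact hcop.dvd_of_dvd_mul_right (h1 ▸ hdvd)
  set F : (∀ i, ZMod (n i)) → ZMod (p ^ l) :=
    fun x => ZMod.castHom hqt (ZMod (p ^ l)) (x t) with hF
  have hFadd : ∀ x y, F (x + y) = F x + F y := by
    intro x y
    exact map_add (ZMod.castHom hqt (ZMod (p ^ l))) (x t) (y t)
  have hFzero : F 0 = 0 := map_zero (ZMod.castHom hqt (ZMod (p ^ l)))
  have hFsub : ∀ x y, F (x - y) = F x - F y := by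
    intro x y
    exact map_sub (ZMod.castHom hqt (ZMod (p ^ l))) (x t) (y t)
  have hFval : ∀ x, F x = (((x t).val : ℕ) : ZMod (p ^ l)) := by
    intro x
    rw [hF]
    simp only [ZMod.castHom_apply]
    rw [ZMod.natCast_val]
  have hFiff : ∀ s s' : (∀ i, ZMod (n i)),
      F s = F s' ↔ (s t).val ≡ (s' t).val [MOD p ^ l] := by
    intro s s'
    rw [hFval, hFval, ZMod.natCast_eq_natCast_iff]
  have hFsurj : Function.Surjective F := by
    intro r
    refine ⟨Pi.single t ((r.val : ℕ) : ZMod (n t)), ?_⟩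
    rw [hF]
    simp only [Pi.single_eq_same]
    rw [map_natCast, ZMod.natCast_val, ZMod.cast_id]
  constructor
  · -- perfect code implies distinctness mod p^l
    rintro ⟨C, hC⟩
    have htile := tiling_of_code S h0 hinv C hC
    set Cf : Finset (∀ i, ZMod (n i)) := (Set.toFinite C).toFinset with hCfdef
    have hCfmem : ∀ x, x ∈ Cf ↔ x ∈ C := fun x => Set.Finite.mem_toFinset _
    set m : ℕ := (Finset.univ.filter (fun g => F g = (0 : ZMod (p ^ l)))).card with hm
    -- all fibers of F have size m
    have hfib : ∀ r : ZMod (p ^ l),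
        (Finset.univ.filter (fun g => F g = r)).card = m := by
      intro r
      obtain ⟨x, hx⟩ := hFsurj r
      rw [hm]
      refine Finset.card_bij (fun g _ => g - x) ?_ ?_ ?_
      · intro a ha
        simp only [Finset.mem_filter, Finset.mem_univ, true_and] at ha ⊢
        rw [hFsub, ha, hx, sub_self]
      · intro a₁ _ a₂ _ h
        exact sub_left_injective h
      · intro b hb
        simp only [Finset.mem_filter, Finset.mem_univ, true_and] at hb
        refine ⟨b + x, ?_, by ring⟩
        simp only [Finset.mem_filter, Finset.mem_univ, true_and]
        rw [hFadd, hb, hx, zero_add]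
    have hcardG : Fintype.card (∀ i, ZMod (n i)) = ∏ i, n i := by
      rw [Fintype.card_pi]
      exact Finset.prod_congr rfl fun i _ => ZMod.card (n i)
    have hqm : p ^ l * m = ∏ i, n i := by
      have h1 : (Finset.univ : Finset (∀ i, ZMod (n i))).card
          = ∑ r : ZMod (p ^ l), (Finset.univ.filter (fun g => F g = r)).card :=
        Finset.card_eq_sum_card_fiberwise (fun x _ => Finset.mem_univ (F x))
      rw [Finset.card_univ, hcardG] at h1
      rw [h1]
      simp only [hfib]
      rw [Finset.sum_const, Finset.card_univ, ZMod.card, smul_eq_mul]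
    have hpm : ¬ p ∣ m := by
      intro h
      exact hndvd (by rw [← hqm, pow_succ]; exact mul_dvd_mul dvd_rfl h)
    -- the tiling bijection
    have hbijinj : ∀ (a₁ : (∀ i, ZMod (n i)) × (∀ i, ZMod (n i))),
        a₁ ∈ (insert 0 S) ×ˢ Cf → ∀ a₂ ∈ (insert 0 S) ×ˢ Cf,
        a₁.1 + a₁.2 = a₂.1 + a₂.2 → a₁ = a₂ := by
      rintro ⟨s₁, c₁⟩ h1 ⟨s₂, c₂⟩ h2 heq
      simp only [Finset.mem_product] at h1 h2
      obtain ⟨w, _, hu⟩ := htile (s₁ + c₁)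
      have e1 : (c₁, s₁) = w := hu (c₁, s₁) ⟨(hCfmem c₁).mp h1.2, h1.1, by ring⟩
      have e2 : (c₂, s₂) = w := hu (c₂, s₂) ⟨(hCfmem c₂).mp h2.2, h2.1, by linear_combination -heq⟩
      have := e1.trans e2.symm
      rw [Prod.ext_iff] at this ⊢
      exact ⟨this.2, this.1⟩
    have hbijsurj : ∀ g : (∀ i, ZMod (n i)), ∃ a ∈ (insert 0 S) ×ˢ Cf,
        a.1 + a.2 = g := by
      intro g
      obtain ⟨⟨c, s⟩, ⟨h1, h2, h3⟩, _⟩ := htile g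
      refine ⟨(s, c), ?_, by rw [← h3]; ring⟩
      simp only [Finset.mem_product]
      exact ⟨h2, (hCfmem c).mpr h1⟩
    have hCfcard : Cf.card = m := by
      have hcards : ((insert 0 S) ×ˢ Cf).card = (Finset.univ : Finset (∀ i, ZMod (n i))).card := by
        refine Finset.card_bij (fun a _ => a.1 + a.2) (fun a _ => Finset.mem_univ _)
          (fun a₁ h₁ a₂ h₂ h => hbijinj a₁ h₁ a₂ h₂ h) ?_
        intro b _
        obtain ⟨a, ha, hab⟩ := hbijsurj b
        exact ⟨a, ha, hab⟩
      rw [Finset.card_product, hcard, Finset.card_univ, hcardG, ← hqm] at hcards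
      exact Nat.eq_of_mul_eq_mul_left (pow_pos hp.pos l) hcards
    -- the algebra
    set A : AddMonoidAlgebra (ZMod p) (ZMod (p ^ l)) :=
      ∑ s ∈ insert 0 S, AddMonoidAlgebra.single (F s) (1 : ZMod p) with hA
    have hAB : A * (∑ c ∈ Cf, AddMonoidAlgebra.single (F c) (1 : ZMod p))
        = AddMonoidAlgebra.single 0 ((m : ZMod p))
            * ∑ r : ZMod (p ^ l), AddMonoidAlgebra.single r (1 : ZMod p) := by
      rw [hA, Finset.sum_mul_sum]
      have lhs1 : ∀ s c : (∀ i, ZMod (n i)),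
          AddMonoidAlgebra.single (F s) (1 : ZMod p) * AddMonoidAlgebra.single (F c) 1
            = AddMonoidAlgebra.single (F (s + c)) 1 := by
        intro s c
        rw [AddMonoidAlgebra.single_mul_single, one_mul, hFadd]
      simp only [lhs1]
      have step1 : ∑ s ∈ insert 0 S, ∑ c ∈ Cf, AddMonoidAlgebra.single (F (s + c)) (1 : ZMod p)
          = ∑ a ∈ (insert 0 S) ×ˢ Cf, AddMonoidAlgebra.single (F (a.1 + a.2)) (1 : ZMod p) :=
        (Finset.sum_product (insert 0 S) Cf
          (fun a => AddMonoidAlgebra.single (F (a.1 + a.2)) (1 : ZMod p))).symm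
      rw [step1]
      have step2 : ∑ a ∈ (insert 0 S) ×ˢ Cf, AddMonoidAlgebra.single (F (a.1 + a.2)) (1 : ZMod p)
          = ∑ g : (∀ i, ZMod (n i)), AddMonoidAlgebra.single (F g) (1 : ZMod p) := by
        refine Finset.sum_bij (fun a _ => a.1 + a.2) (fun a _ => Finset.mem_univ _)
          (fun a₁ h₁ a₂ h₂ h => hbijinj a₁ h₁ a₂ h₂ h) ?_ (fun a _ => rfl)
        intro b _
        obtain ⟨a, ha, hab⟩ := hbijsurj b
        exact ⟨a, ha, hab⟩
      rw [step2]
      have step3 : ∑ g : (∀ i, ZMod (n i)), AddMonoidAlgebra.single (F g) (1 : ZMod p)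
          = ∑ r : ZMod (p ^ l), ∑ g ∈ Finset.univ.filter (fun g => F g = r),
              AddMonoidAlgebra.single (F g) (1 : ZMod p) :=
        (Finset.sum_fiberwise _ _ _).symm
      rw [step3]
      rw [Finset.mul_sum]
      refine Finset.sum_congr rfl fun r _ => ?_
      have step4 : ∑ g ∈ Finset.univ.filter (fun g => F g = r),
          AddMonoidAlgebra.single (F g) (1 : ZMod p)
            = ∑ _g ∈ Finset.univ.filter (fun g => F g = r),
                AddMonoidAlgebra.single r (1 : ZMod p) := by
        refine Finset.sum_congr rfl fun g hg => ?_
        simp only [Finset.mem_filter] at hg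
        rw [hg.2]
      rw [step4, Finset.sum_const, hfib r]
      rw [AddMonoidAlgebra.single_mul_single, zero_add, mul_one]
      have : m • (AddMonoidAlgebra.single r (1 : ZMod p))
          = AddMonoidAlgebra.single r (m • (1 : ZMod p)) := AddMonoidAlgebra.smul_single _ _ _
      rw [this, nsmul_eq_mul, mul_one]
    have hconst := core_const p l m hp hpm Cf hCfcard (fun c => F c) A hAB
    -- coefficients of A count fibers in S₀
    have hAcoeff : ∀ r : ZMod (p ^ l),
        A.coeff r = (((insert 0 S).filter (fun s => F s = r)).card : ZMod p) := by
      intro r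
      rw [hA]
      have h1 : (∑ s ∈ insert 0 S, AddMonoidAlgebra.single (F s) (1 : ZMod p)).coeff r
          = ∑ s ∈ insert 0 S, (AddMonoidAlgebra.single (F s) (1 : ZMod p)).coeff r := by
        rw [AddMonoidAlgebra.coeff_sum, Finsupp.finset_sum_apply]
      rw [h1]
      have h2 : ∀ s, (AddMonoidAlgebra.single (F s) (1 : ZMod p)).coeff r
          = if F s = r then (1 : ZMod p) else 0 := fun s => Finsupp.single_apply
      simp only [h2]
      exact Finset.sum_boole _ _
    -- counts
    have hcount : ∀ r : ZMod (p ^ l),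
        ((((insert 0 S).filter (fun s => F s = r)).card : ZMod p))
          = ((((insert 0 S).filter (fun s => F s = 0)).card : ZMod p)) := by
      intro r
      rw [← hAcoeff, ← hAcoeff, hconst]
    have hmk : (m : ZMod p) ≠ 0 := by
      rw [Ne, ZMod.natCast_eq_zero_iff]
      exact hpm
    have hRT : (AddMonoidAlgebra.single (0 : ZMod (p ^ l)) ((m : ZMod p))
        * ∑ r : ZMod (p ^ l), AddMonoidAlgebra.single r (1 : ZMod p)).coeff
          (0 : ZMod (p ^ l)) = (m : ZMod p) := by
      rw [Finset.mul_sum]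
      have h3 : ∀ r : ZMod (p ^ l), AddMonoidAlgebra.single (0 : ZMod (p ^ l)) ((m : ZMod p))
          * AddMonoidAlgebra.single r (1 : ZMod p)
            = AddMonoidAlgebra.single r ((m : ZMod p)) := by
        intro r
        rw [AddMonoidAlgebra.single_mul_single, zero_add, mul_one]
      simp only [h3]
      rw [AddMonoidAlgebra.coeff_sum, Finsupp.finset_sum_apply]
      have h4 : ∀ r : ZMod (p ^ l), (AddMonoidAlgebra.single r ((m : ZMod p))).coeff (0 : ZMod (p ^ l))
          = if r = 0 then (m : ZMod p) else 0 := fun r => Finsupp.single_apply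
      simp only [h4]
      rw [Finset.sum_ite_eq' Finset.univ (0 : ZMod (p ^ l)) (fun _ => (m : ZMod p))]
      simp
    have hAne : A ≠ 0 := by
      intro h
      rw [h, zero_mul] at hAB
      apply hmk
      rw [← hRT, ← hAB]
      simp
    have hge1 : ∀ r : ZMod (p ^ l), 1 ≤ ((insert 0 S).filter (fun s => F s = r)).card := by
      intro r
      rw [Nat.one_le_iff_ne_zero]
      intro hc
      have hz : ((((insert 0 S).filter (fun s => F s = 0)).card : ZMod p)) = 0 := by
        rw [← hcount r, hc]
        simp
      exact hAne (AddMonoidAlgebra.ext (Finsupp.ext fun a => by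
        rw [hAcoeff a, hcount a, hz]
        simp))
    have hsum : ∑ r : ZMod (p ^ l), ((insert 0 S).filter (fun s => F s = r)).card = p ^ l := by
      rw [← Finset.card_eq_sum_card_fiberwise (fun x _ => Finset.mem_univ (F x)), hcard]
    have hone : ∀ r : ZMod (p ^ l), ((insert 0 S).filter (fun s => F s = r)).card = 1 := by
      intro r
      by_contra hne
      have h2 : 1 < ((insert 0 S).filter (fun s => F s = r)).card :=
        lt_of_le_of_ne (hge1 r) (Ne.symm hne)
      have hlt : ∑ _r : ZMod (p ^ l), 1
          < ∑ r : ZMod (p ^ l), ((insert 0 S).filter (fun s => F s = r)).card :=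
        Finset.sum_lt_sum (fun i _ => hge1 i) ⟨r, Finset.mem_univ r, h2⟩
      rw [hsum, Finset.sum_const, Finset.card_univ, ZMod.card, smul_eq_mul, mul_one] at hlt
      exact lt_irrefl _ hlt
    -- conclude injectivity
    intro s hs s' hs' hne hmod
    have hFeq : F s = F s' := (hFiff s s').mpr hmod
    have h1 : s ∈ (insert 0 S).filter (fun x => F x = F s) :=
      Finset.mem_filter.mpr ⟨hs, rfl⟩
    have h2 : s' ∈ (insert 0 S).filter (fun x => F x = F s) :=
      Finset.mem_filter.mpr ⟨hs', hFeq.symm⟩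
    exact hne (Finset.card_le_one.mp (le_of_eq (hone (F s))) s h1 s' h2)
  · -- distinctness implies perfect code
    intro hdist
    have hinj : ∀ s ∈ insert 0 S, ∀ s' ∈ insert 0 S, F s = F s' → s = s' := by
      intro s hs s' hs' h
      by_contra hne
      exact hdist s hs s' hs' hne ((hFiff s s').mp h)
    have himg : (insert 0 S).image F = Finset.univ := by
      refine Finset.eq_univ_of_card _ ?_
      rw [Finset.card_image_of_injOn (fun a ha b hb h => hinj a ha b hb h), hcard,
        ZMod.card]
    have hrep : ∀ v : (∀ i, ZMod (n i)), ∃ s ∈ insert 0 S, F s = F v := by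
      intro v
      have : F v ∈ (insert 0 S).image F := by rw [himg]; exact Finset.mem_univ _
      obtain ⟨s, hs, hFs⟩ := Finset.mem_image.mp this
      exact ⟨s, hs, hFs⟩
    refine ⟨{x | F x = 0}, ?_, ?_⟩
    · intro c hc c' hc' hadj
      have hs : c' - c ∈ S := (cayley_adj S h0 hinv c c').mp hadj
      have hFs : F (c' - c) = 0 := by
        rw [hFsub, Set.mem_setOf_eq.mp hc, Set.mem_setOf_eq.mp hc', sub_zero]
      have : c' - c = 0 := by
        refine hinj _ (Finset.mem_insert_of_mem hs) 0 (Finset.mem_insert_self _ _) ?_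
        rw [hFs, hFzero]
      rw [this] at hs
      exact h0 hs
    · intro v hv
      obtain ⟨s, hs, hFs⟩ := hrep v
      have hsne : s ≠ 0 := by
        intro h
        rw [h, hFzero] at hFs
        exact hv (Set.mem_setOf_eq ▸ hFs.symm)
      have hsS : s ∈ S := (Finset.mem_insert.mp hs).resolve_left hsne
      refine ⟨v - s, ⟨?_, ?_⟩, ?_⟩
      · show F (v - s) = 0
        rw [hFsub, hFs, sub_self]
      · refine (cayley_adj S h0 hinv v (v - s)).mpr ?_
        have : v - s - v = -s := by ring
        rw [this]
        exact hinv _ hsS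
      · rintro c' ⟨hc'C, hadj'⟩
        have hcg : c' - v ∈ S := (cayley_adj S h0 hinv v c').mp hadj'
        have hs' : v - c' ∈ S := by
          have := hinv _ hcg
          rwa [neg_sub] at this
        have hFs' : F (v - c') = F s := by
          rw [hFsub, Set.mem_setOf_eq.mp hc'C, sub_zero, hFs]
        have heq : v - c' = s :=
          hinj _ (Finset.mem_insert_of_mem hs') _ (Finset.mem_insert_of_mem hsS) hFs'
        have := congrArg (fun z => v - z) heq
        simpa using this
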